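/- The unique solution X ∈ ℚ[[t]] of the functional equation X = 𝒰(t)·X + (1/2)·[ℰ₁(t)² + ℰ₁(t²)] + (ℰ₁(t)/2)·[(𝒰(t)·(1 − 𝒰(t))⁻¹)² + 𝒰(t²)·(1 − 𝒰(t²))⁻¹] + 𝒰(t)²·ℰ₁(t)·(1 − 𝒰(t))⁻³ is X = (1/2)·(1 − 𝒰(t))⁻¹·[ℰ₁(t)² + ℰ₁(t²)] + (1/2)·𝒰(t)²·ℰ₁(t)·(1 − 𝒰(t))⁻³ + (1/2)·𝒰(t²)·ℰ₁(t)·(1 − 𝒰(t))⁻¹·(1 − 𝒰(t²))⁻¹ + ℰ₁(t)·𝒰(t)²·(1 − 𝒰(t))⁻⁴; this X is the ordinary generating function ℰ₂ of unlabeled time-consistent galled trees with exactly two galls. -/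

import Mathlib

open PowerSeries

/-- `substSq F` is the formal power series `F(t²)` obtained from `F ∈ ℚ[[t]]` by
substituting `t²` for `t`. -/
noncomputable def substSq (F : PowerSeries ℚ) : PowerSeries ℚ :=
  PowerSeries.mk fun n => if 2 ∣ n then PowerSeries.coeff (R := ℚ) (n / 2) F else 0

/-- The unique solution `X ∈ ℚ[[t]]` of the functional equation
`X = 𝒰(t)·X + (1/2)·[ℰ₁(t)² + ℰ₁(t²)] + (ℰ₁(t)/2)·[(𝒰(t)·(1-𝒰(t))⁻¹)² + 𝒰(t²)·(1-𝒰(t²))⁻¹]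
   + 𝒰(t)²·ℰ₁(t)·(1-𝒰(t))⁻³`
is
`X = (1/2)·(1-𝒰(t))⁻¹·[ℰ₁(t)² + ℰ₁(t²)] + (1/2)·𝒰(t)²·ℰ₁(t)·(1-𝒰(t))⁻³
   + (1/2)·𝒰(t²)·ℰ₁(t)·(1-𝒰(t))⁻¹·(1-𝒰(t²))⁻¹ + ℰ₁(t)·𝒰(t)²·(1-𝒰(t))⁻⁴`,
the OGF `ℰ₂` of unlabeled time-consistent galled trees with exactly two galls.  Here
`𝒰` is the unique series with zero constant coefficient satisfying
`𝒰(t) = t + (1/2)·[𝒰(t)² + 𝒰(t²)]` and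
`ℰ₁ = (1/2)·𝒰(t)³·(1-𝒰(t))⁻³ + (1/2)·𝒰(t)·𝒰(t²)·(1-𝒰(t))⁻¹·(1-𝒰(t²))⁻¹`. -/
theorem stmt_16 (U E1 : PowerSeries ℚ) (h0 : constantCoeff (R := ℚ) U = 0)
    (hU : U = PowerSeries.X + (1 / 2 : ℚ) • (U ^ 2 + substSq U))
    (hE1 : E1 = (1 / 2 : ℚ) • (U ^ 3 * ((1 - U)⁻¹) ^ 3)
        + (1 / 2 : ℚ) • (U * substSq U * (1 - U)⁻¹ * (1 - substSq U)⁻¹)) :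
    ∀ X : PowerSeries ℚ,
      X = U * X + (1 / 2 : ℚ) • (E1 ^ 2 + substSq E1)
          + ((1 / 2 : ℚ) • E1) *
              ((U * (1 - U)⁻¹) ^ 2 + substSq U * (1 - substSq U)⁻¹)
          + U ^ 2 * E1 * ((1 - U)⁻¹) ^ 3 ↔
      X = (1 / 2 : ℚ) • ((1 - U)⁻¹ * (E1 ^ 2 + substSq E1))
          + (1 / 2 : ℚ) • (U ^ 2 * E1 * ((1 - U)⁻¹) ^ 3)
          + (1 / 2 : ℚ) • (substSq U * E1 * (1 - U)⁻¹ * (1 - substSq U)⁻¹)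
          + E1 * U ^ 2 * ((1 - U)⁻¹) ^ 4 := by
  intro X
  have hc : constantCoeff (R := ℚ) (1 - U) ≠ 0 := by simp [h0]
  have hV : (1 - U) * (1 - U)⁻¹ = 1 := PowerSeries.mul_inv_cancel _ hc
  simp only [smul_eq_C_mul]
  set c : PowerSeries ℚ := C (R := ℚ) (1/2) with hcdef
  set V : PowerSeries ℚ := (1 - U)⁻¹ with hVdef
  set W : PowerSeries ℚ := (1 - substSq U)⁻¹ with hWdef
  have key : (1 - U) * (c * (V * (E1 ^ 2 + substSq E1)) + c * (U ^ 2 * E1 * V ^ 3)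
        + c * (substSq U * E1 * V * W) + E1 * U ^ 2 * V ^ 4)
      = c * (E1 ^ 2 + substSq E1) + (c * E1) * ((U * V) ^ 2 + substSq U * W)
        + U ^ 2 * E1 * V ^ 3 := by
    linear_combination (c * (E1 ^ 2 + substSq E1) + c * U ^ 2 * E1 * V ^ 2
      + c * substSq U * E1 * W + E1 * U ^ 2 * V ^ 3) * hV
  constructor <;> intro h
  · linear_combination V * h - V * key +
      ((c * (V * (E1 ^ 2 + substSq E1)) + c * (U ^ 2 * E1 * V ^ 3)
        + c * (substSq U * E1 * V * W) + E1 * U ^ 2 * V ^ 4) - X) * hV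
  · linear_combination (1 - U) * h + key
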